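/- Let M be a matroid and Q, R disjoint subsets of E(M) with k := κ_M(Q,R), and let F ⊆ E(M) − (Q ∪ R) be a set of elements each of which is non-flexible with respect to (Q,R). Then there is an ordering (f₁,…,fₙ) of F and a nested sequence A₁ ⊆ A₂ ⊆ … ⊆ Aₙ of subsets of E(M) such that for each i: (i) Q ⊆ Aᵢ ⊆ E(M)−R and λ_M(Aᵢ) ≤ k; (ii) Aᵢ ∩ F = {f₁,…,fᵢ}; (iii) fᵢ ∈ cl(Aᵢ−{fᵢ}) ∩ cl(E(M)−Aᵢ) or fᵢ ∈ cl*(Aᵢ−{fᵢ}) ∩ cl*(E(M)−Aᵢ). -/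

import Mathlib

open Set

variable {α : Type*}

/-- The rank of a set `X` in a matroid `M`: the supremum of cardinalities of
independent subsets of `X`. -/
noncomputable def Matroid.rk' (M : Matroid α) (X : Set α) : ℕ :=
  sSup {n | ∃ I, M.Indep I ∧ I ⊆ X ∧ I.ncard = n}

/-- The connectivity function `λ_M(X) = r(X) + r(E \ X) - r(M)`. -/
noncomputable def Matroid.lam (M : Matroid α) (X : Set α) : ℕ :=
  M.rk' X + M.rk' (M.E \ X) - M.rk' M.E

/-- The connectivity `κ_M(Q,R)` between disjoint sets `Q` and `R`. -/
noncomputable def Matroid.kappa (M : Matroid α) (Q R : Set α) : ℕ :=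
  sInf {k | ∃ X, Q ⊆ X ∧ X ⊆ M.E \ R ∧ M.lam X = k}

/-- Deletion of a set of elements. -/
def Matroid.del (M : Matroid α) (D : Set α) : Matroid α := M.restrict (M.E \ D)

/-- Contraction of a set of elements, defined via duality: `M / C = (M* \ C)*`. -/
def Matroid.con (M : Matroid α) (C : Set α) : Matroid α := (M✶.del C)✶

/-- `N` is a minor of `M` if it is obtained by contracting a set `C` and deleting a
disjoint set `D`. -/
def Matroid.IsMinorOf (N M : Matroid α) : Prop :=
  ∃ C D, C ⊆ M.E ∧ D ⊆ M.E ∧ Disjoint C D ∧ N = (M.con C).del D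

/-- `e` is deletable with respect to `(Q,R)`. -/
noncomputable def Matroid.Deletable (M : Matroid α) (Q R : Set α) (e : α) : Prop :=
  (M.del {e}).kappa Q R = M.kappa Q R

/-- `e` is contractible with respect to `(Q,R)`. -/
noncomputable def Matroid.Contractible (M : Matroid α) (Q R : Set α) (e : α) : Prop :=
  (M.con {e}).kappa Q R = M.kappa Q R

/-- `e` is flexible with respect to `(Q,R)` if it is both deletable and contractible. -/
noncomputable def Matroid.Flexible (M : Matroid α) (Q R : Set α) (e : α) : Prop :=
  M.Deletable Q R e ∧ M.Contractible Q R e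

/-- The local connectivity `⊓_M(A,B) = r(A) + r(B) - r(A ∪ B)`. -/
noncomputable def Matroid.localConn (M : Matroid α) (A B : Set α) : ℕ :=
  M.rk' A + M.rk' B - M.rk' (A ∪ B)


section Aux

namespace Matroid

variable {M : Matroid α} {X Y A B I : Set α} {e f : α}

lemma rk'_bddAbove (M : Matroid α) [M.Finite] (X : Set α) :
    BddAbove {n | ∃ I, M.Indep I ∧ I ⊆ X ∧ I.ncard = n} := by
  refine ⟨M.E.ncard, fun n ⟨I, hI, _, hn⟩ => ?_⟩
  exact hn ▸ ncard_le_ncard hI.subset_ground M.ground_finite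

lemma rk'_nonempty (M : Matroid α) (X : Set α) :
    {n | ∃ I, M.Indep I ∧ I ⊆ X ∧ I.ncard = n}.Nonempty :=
  ⟨0, ∅, M.empty_indep, empty_subset X, ncard_empty α⟩

lemma Indep.ncard_le_rk' [M.Finite] (hI : M.Indep I) (hIX : I ⊆ X) : I.ncard ≤ M.rk' X :=
  le_csSup (M.rk'_bddAbove X) ⟨I, hI, hIX, rfl⟩

lemma IsBasis.ncard_eq_rk' [M.Finite] (hI : M.IsBasis I X) : I.ncard = M.rk' X := by
  refine le_antisymm (hI.indep.ncard_le_rk' hI.subset) (csSup_le (M.rk'_nonempty X) ?_)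
  rintro n ⟨J, hJ, hJX, rfl⟩
  obtain ⟨J', hJ', hJJ'⟩ := hJ.subset_isBasis_of_subset hJX hI.subset_ground
  calc J.ncard ≤ J'.ncard := ncard_le_ncard hJJ' (M.set_finite J' hJ'.indep.subset_ground)
    _ = I.ncard := by
        rw [ncard_def, hJ'.encard_eq_encard hI, ← ncard_def]

lemma exists_rk'_basis (M : Matroid α) [M.Finite] (hX : X ⊆ M.E) :
    ∃ I, M.IsBasis I X ∧ I.ncard = M.rk' X := by
  obtain ⟨I, hI⟩ := M.exists_isBasis X
  exact ⟨I, hI, hI.ncard_eq_rk'⟩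

lemma rk'_mono [M.Finite] (hXY : X ⊆ Y) (hY : Y ⊆ M.E) : M.rk' X ≤ M.rk' Y := by
  obtain ⟨I, hI, hc⟩ := M.exists_rk'_basis (hXY.trans hY)
  exact hc ▸ hI.indep.ncard_le_rk' (hI.subset.trans hXY)

lemma rk'_le_ncard [M.Finite] (hX : X ⊆ M.E) : M.rk' X ≤ X.ncard := by
  obtain ⟨I, hI, hc⟩ := M.exists_rk'_basis hX
  exact hc ▸ ncard_le_ncard hI.subset (M.set_finite X hX)

@[simp] lemma rk'_empty (M : Matroid α) [M.Finite] : M.rk' ∅ = 0 :=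
  Nat.le_zero.mp ((rk'_le_ncard (empty_subset _)).trans_eq (ncard_empty α))

lemma rk'_submod (M : Matroid α) [M.Finite] (hA : A ⊆ M.E) (hB : B ⊆ M.E) :
    M.rk' (A ∪ B) + M.rk' (A ∩ B) ≤ M.rk' A + M.rk' B := by
  obtain ⟨I, hI, hIc⟩ := M.exists_rk'_basis (X := A ∩ B) ((inter_subset_left).trans hA)
  obtain ⟨J, hJ, hIJ⟩ := hI.indep.subset_isBasis_of_subset
    (hI.subset.trans (inter_subset_left.trans subset_union_left)) (union_subset hA hB)
  have hJfin : J.Finite := M.set_finite J hJ.indep.subset_ground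
  have h1 : (J ∩ A).ncard ≤ M.rk' A := (hJ.indep.inter_right A).ncard_le_rk' inter_subset_right
  have h2 : (J ∩ B).ncard ≤ M.rk' B := (hJ.indep.inter_right B).ncard_le_rk' inter_subset_right
  have hU : (J ∩ A) ∪ (J ∩ B) = J := by
    rw [← inter_union_distrib_left, inter_eq_self_of_subset_left hJ.subset]
  have hI2 : (J ∩ A) ∩ (J ∩ B) = J ∩ (A ∩ B) := by
    ext x; simp only [mem_inter_iff]; tauto
  have hcard : (J ∩ (A ∩ B)).ncard ≤ M.rk' (A ∩ B) :=
    (hJ.indep.inter_right _).ncard_le_rk' inter_subset_right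
  have hcard2 : M.rk' (A ∩ B) ≤ (J ∩ (A ∩ B)).ncard := by
    rw [← hIc]
    exact ncard_le_ncard (subset_inter hIJ hI.subset) (hJfin.inter_of_left _)
  have hkey := ncard_union_add_ncard_inter (J ∩ A) (J ∩ B) (hJfin.inter_of_left _)
    (hJfin.inter_of_left _)
  rw [hU, hI2] at hkey
  have := hJ.ncard_eq_rk'
  omega

lemma rk'_singleton_le (M : Matroid α) [M.Finite] (e : α) : M.rk' {e} ≤ 1 := by
  refine csSup_le (M.rk'_nonempty _) ?_
  rintro n ⟨I, hI, hIX, rfl⟩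
  have := ncard_le_ncard hIX (finite_singleton e)
  simpa using this

lemma rk'_union_le (M : Matroid α) [M.Finite] (hA : A ⊆ M.E) (hB : B ⊆ M.E) :
    M.rk' (A ∪ B) ≤ M.rk' A + M.rk' B :=
  le_trans (Nat.le_add_right _ _) (M.rk'_submod hA hB)

lemma rk'_insert_le (M : Matroid α) [M.Finite] (hX : X ⊆ M.E) (he : e ∈ M.E) :
    M.rk' (insert e X) ≤ M.rk' X + 1 := by
  have h := M.rk'_union_le hX (singleton_subset_iff.mpr he)
  rw [union_singleton] at h
  exact h.trans (by have := M.rk'_singleton_le e; omega)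

lemma rk'_le_insert (M : Matroid α) [M.Finite] (hX : X ⊆ M.E) (he : e ∈ M.E) :
    M.rk' X ≤ M.rk' (insert e X) :=
  rk'_mono (subset_insert e X) (insert_subset he hX)

lemma rk'_compl_add_le (M : Matroid α) [M.Finite] (hX : X ⊆ M.E) :
    M.rk' M.E ≤ M.rk' X + M.rk' (M.E \ X) := by
  have h := M.rk'_union_le hX (diff_subset (t := X))
  rwa [union_diff_cancel hX] at h

end Matroid


namespace Matroid

variable {M : Matroid α} {X Y A B I : Set α} {e f : α}

lemma mem_closure_iff_rk' [M.Finite] (hX : X ⊆ M.E) (he : e ∈ M.E) :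
    e ∈ M.closure X ↔ M.rk' (insert e X) = M.rk' X := by
  obtain ⟨I, hI, hIc⟩ := M.exists_rk'_basis hX
  constructor
  · intro hecl
    by_cases heX : e ∈ X
    · rw [insert_eq_self.mpr heX]
    have heI : e ∈ M.closure I := by rwa [hI.closure_eq_closure]
    have hIb : M.IsBasis I (insert e X) := by
      refine hI.indep.isBasis_of_subset_of_subset_closure
        (hI.subset.trans (subset_insert e X)) ?_
      exact insert_subset heI (hI.subset_closure.trans (M.closure_subset_closure
        (hI.subset.trans (subset_refl X)) |>.trans (by rw [hI.closure_eq_closure])))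
    rw [← hIb.ncard_eq_rk', hIc]
  · intro hr
    obtain ⟨J, hJ, hIJ⟩ := hI.indep.subset_isBasis_of_subset
      (hI.subset.trans (subset_insert e X)) (insert_subset he hX)
    have hJI : I = J := by
      refine eq_of_subset_of_ncard_le hIJ ?_ (M.set_finite J hJ.indep.subset_ground)
      rw [hJ.ncard_eq_rk', hIc, hr]
    have : e ∈ M.closure J := hJ.subset_closure (mem_insert e X)
    rw [← hJI, hI.closure_eq_closure] at this
    exact this

lemma not_mem_closure_iff_rk' [M.Finite] (hX : X ⊆ M.E) (he : e ∈ M.E) :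
    e ∉ M.closure X ↔ M.rk' (insert e X) = M.rk' X + 1 := by
  rw [mem_closure_iff_rk' hX he]
  have h1 := M.rk'_insert_le hX he
  have h2 := M.rk'_le_insert hX he
  omega

lemma base_ncard_eq_rk' [M.Finite] (hB : M.IsBase B) : B.ncard = M.rk' M.E :=
  hB.isBasis_ground.ncard_eq_rk'

/-- The dual rank formula, in additive form. -/
lemma rk'_dual_add (M : Matroid α) [M.Finite] (hX : X ⊆ M.E) :
    M✶.rk' X + M.rk' M.E = X.ncard + M.rk' (M.E \ X) := by
  obtain ⟨I, hI, hIc⟩ := M.exists_rk'_basis (X := M.E \ X) diff_subset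
  obtain ⟨B, hBb, hIB⟩ := hI.indep.subset_isBasis_of_subset hI.indep.subset_ground
    (subset_refl M.E)
  rw [isBasis_ground_iff] at hBb
  have hBfin : B.Finite := M.set_finite B hBb.subset_ground
  have hXfin : X.Finite := M.set_finite X hX
  have hBI : B ∩ (M.E \ X) = I := by
    refine (hI.eq_of_subset_indep (hBb.indep.inter_right _)
      (subset_inter hIB hI.subset) inter_subset_right).symm
  -- `X \ B` is a maximum-size dual-independent subset of `X`
  have hind : M✶.Indep (X \ B) :=
    (M.dual_indep_iff_exists (diff_subset.trans hX)).mpr ⟨B, hBb, disjoint_sdiff_left⟩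
  have hcard : ∀ J, M✶.Indep J → J ⊆ X → J.ncard + M.rk' M.E ≤ X.ncard + M.rk' (M.E \ X) := by
    intro J hJ hJX
    obtain ⟨B', hB', hdj⟩ := (M.dual_indep_iff_exists (hJX.trans hX)).mp hJ
    have hB'fin : B'.Finite := M.set_finite B' hB'.subset_ground
    have h1 : J.ncard ≤ (X \ B').ncard :=
      ncard_le_ncard (subset_diff.mpr ⟨hJX, hdj⟩) (hXfin.diff (t := B'))
    have h2 : (X \ B').ncard + (X ∩ B').ncard = X.ncard := by
      rw [add_comm, ncard_inter_add_ncard_diff_eq_ncard X B' hXfin]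
    have h3 : (B' ∩ X).ncard + (B' \ X).ncard = B'.ncard :=
      ncard_inter_add_ncard_diff_eq_ncard B' X hB'fin
    have h4 : (B' \ X).ncard ≤ M.rk' (M.E \ X) :=
      (hB'.indep.diff X).ncard_le_rk' (diff_subset_diff_left hB'.subset_ground)
    have h5 : B'.ncard = M.rk' M.E := base_ncard_eq_rk' hB'
    have h6 : (X ∩ B').ncard = (B' ∩ X).ncard := by rw [inter_comm]
    omega
  have hXB : M✶.rk' X = (X \ B).ncard := by
    refine le_antisymm (csSup_le (M✶.rk'_nonempty X) ?_) (hind.ncard_le_rk' diff_subset)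
    rintro n ⟨J, hJ, hJX, rfl⟩
    have := hcard J hJ hJX
    have h2 : (X \ B).ncard + (X ∩ B).ncard = X.ncard := by
      rw [add_comm, ncard_inter_add_ncard_diff_eq_ncard X B hXfin]
    have h3 : (B ∩ X).ncard + (B \ X).ncard = B.ncard :=
      ncard_inter_add_ncard_diff_eq_ncard B X hBfin
    have h4 : B \ X = B ∩ (M.E \ X) := by
      ext x
      simp only [mem_diff, mem_inter_iff]
      exact ⟨fun ⟨h1, h2⟩ => ⟨h1, hBb.subset_ground h1, h2⟩, fun ⟨h1, _, h2⟩ => ⟨h1, h2⟩⟩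
    have h5 : B.ncard = M.rk' M.E := base_ncard_eq_rk' hBb
    have h6 : (X ∩ B).ncard = (B ∩ X).ncard := by rw [inter_comm]
    rw [h4, hBI, hIc] at h3
    omega
  rw [hXB]
  have h2 : (X \ B).ncard + (X ∩ B).ncard = X.ncard := by
    rw [add_comm, ncard_inter_add_ncard_diff_eq_ncard X B hXfin]
  have h3 : (B ∩ X).ncard + (B \ X).ncard = B.ncard :=
    ncard_inter_add_ncard_diff_eq_ncard B X hBfin
  have h4 : B \ X = B ∩ (M.E \ X) := by
    ext x
    simp only [mem_diff, mem_inter_iff]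
    exact ⟨fun ⟨h1, h2⟩ => ⟨h1, hBb.subset_ground h1, h2⟩, fun ⟨h1, _, h2⟩ => ⟨h1, h2⟩⟩
  have h5 : B.ncard = M.rk' M.E := base_ncard_eq_rk' hBb
  have h6 : (X ∩ B).ncard = (B ∩ X).ncard := by rw [inter_comm]
  rw [h4, hBI, hIc] at h3
  omega

end Matroid

namespace Matroid

variable {M : Matroid α} {X Y A B Q R : Set α} {e f : α}

lemma lam_add_rk (M : Matroid α) [M.Finite] (hX : X ⊆ M.E) :
    M.lam X + M.rk' M.E = M.rk' X + M.rk' (M.E \ X) := by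
  have := M.rk'_compl_add_le hX
  rw [Matroid.lam]
  omega

lemma lam_dual (M : Matroid α) [M.Finite] (hX : X ⊆ M.E) : M✶.lam X = M.lam X := by
  have hXc : M.E \ X ⊆ M.E := diff_subset
  have hd1 := M.rk'_dual_add hX
  have hd2 := M.rk'_dual_add hXc
  have hd3 := M.rk'_dual_add (subset_refl M.E)
  rw [diff_diff_cancel_left hX] at hd2
  rw [diff_self] at hd3
  have hdual1 : M✶.lam X + M✶.rk' M✶.E = M✶.rk' X + M✶.rk' (M✶.E \ X) :=
    M✶.lam_add_rk (by rwa [dual_ground])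
  rw [dual_ground] at hdual1
  have hM := M.lam_add_rk hX
  have hcard : (M.E \ X).ncard + X.ncard = M.E.ncard :=
    ncard_diff_add_ncard_of_subset hX M.ground_finite
  have h0 : M.rk' ∅ = 0 := M.rk'_empty
  have hle : M.rk' M.E ≤ M.E.ncard := rk'_le_ncard (subset_refl _)
  omega

lemma lam_dual' (M : Matroid α) [M.Finite] (hX : X ⊆ M.E) : M.lam X = M✶.lam X :=
  (M.lam_dual hX).symm

lemma kappa_dual (M : Matroid α) [M.Finite] (Q R : Set α) : M✶.kappa Q R = M.kappa Q R := by
  unfold Matroid.kappa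
  congr 1
  ext n
  constructor
  · rintro ⟨X, h1, h2, h3⟩
    rw [dual_ground] at h2
    exact ⟨X, h1, h2, by rw [← M.lam_dual (h2.trans diff_subset)]; exact h3⟩
  · rintro ⟨X, h1, h2, h3⟩
    exact ⟨X, h1, by rwa [dual_ground], by rw [M.lam_dual (h2.trans diff_subset)]; exact h3⟩

@[simp] lemma del_ground (M : Matroid α) (D : Set α) : (M.del D).E = M.E \ D := rfl

lemma del_finite (M : Matroid α) [M.Finite] (D : Set α) : (M.del D).Finite :=
  restrict_finite (M.ground_finite.subset diff_subset)

lemma rk'_del (M : Matroid α) (D : Set α) (hX : X ⊆ M.E \ D) : (M.del D).rk' X = M.rk' X := by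
  unfold Matroid.rk' Matroid.del
  congr 1
  ext n
  constructor
  · rintro ⟨I, hI, hIX, rfl⟩
    exact ⟨I, (restrict_indep_iff.mp hI).1, hIX, rfl⟩
  · rintro ⟨I, hI, hIX, rfl⟩
    exact ⟨I, restrict_indep_iff.mpr ⟨hI, hIX.trans hX⟩, hIX, rfl⟩

lemma lam_del_singleton (M : Matroid α) [M.Finite] (hf : f ∈ M.E) (hX : X ⊆ M.E \ {f}) :
    (M.del {f}).lam X + M.rk' (M.E \ {f}) = M.rk' X + M.rk' (M.E \ (X ∪ {f})) := by
  have hc : (M.del {f}).E \ X = M.E \ (X ∪ {f}) := by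
    rw [del_ground, diff_diff, union_comm]
  have h1 : (M.del {f}).lam X + (M.del {f}).rk' (M.del {f}).E =
      (M.del {f}).rk' X + (M.del {f}).rk' ((M.del {f}).E \ X) := by
    have : (M.del {f}).Finite := M.del_finite {f}
    exact (M.del {f}).lam_add_rk (by rw [del_ground]; exact hX)
  rw [hc, del_ground] at h1
  rw [M.rk'_del {f} hX, M.rk'_del {f} (X := M.E \ (X ∪ {f}))
      (by rw [union_comm, ← diff_diff]; exact diff_subset),
    M.rk'_del {f} (subset_refl _)] at h1
  exact h1

lemma kappa_le_lam (M : Matroid α) (hQX : Q ⊆ X) (hXR : X ⊆ M.E \ R) :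
    M.kappa Q R ≤ M.lam X :=
  Nat.sInf_le ⟨X, hQX, hXR, rfl⟩

lemma exists_kappa_min (M : Matroid α) (hQ : Q ⊆ M.E) (hQR : Disjoint Q R) :
    ∃ X, Q ⊆ X ∧ X ⊆ M.E \ R ∧ M.lam X = M.kappa Q R := by
  have hne : {k | ∃ X, Q ⊆ X ∧ X ⊆ M.E \ R ∧ M.lam X = k}.Nonempty :=
    ⟨M.lam Q, Q, subset_refl Q, subset_diff.mpr ⟨hQ, hQR⟩, rfl⟩
  exact Nat.sInf_mem hne

end Matroid


namespace Matroid

variable {M : Matroid α} {X Y A B Q R S : Set α} {e f : α}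

lemma kappa_del_le (M : Matroid α) [M.Finite] (hQ : Q ⊆ M.E) (hQR : Disjoint Q R)
    (hf : f ∈ M.E \ (Q ∪ R)) : (M.del {f}).kappa Q R ≤ M.kappa Q R := by
  obtain ⟨X, hQX, hXR, hX⟩ := M.exists_kappa_min hQ hQR
  have hfE : f ∈ M.E := hf.1
  have hfQ : f ∉ Q := fun h => hf.2 (Or.inl h)
  have hXE : X ⊆ M.E := hXR.trans diff_subset
  set S := X \ {f} with hS
  have hQS : Q ⊆ S := fun x hx => ⟨hQX hx, fun hh => hfQ (mem_singleton_iff.mp hh ▸ hx)⟩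
  have hSsub : S ⊆ M.E \ {f} := fun x hx => ⟨hXE hx.1, hx.2⟩
  have hSR : S ⊆ (M.del {f}).E \ R := by
    rw [del_ground]
    exact fun x hx => ⟨⟨hXE hx.1, hx.2⟩, (hXR hx.1).2⟩
  refine le_trans ((M.del {f}).kappa_le_lam hQS hSR) ?_
  rw [← hX]
  have hlamdel := M.lam_del_singleton hfE hSsub
  have hlamX := M.lam_add_rk hXE
  by_cases hfX : f ∈ X
  · have hSf : S ∪ {f} = X := by
      rw [hS, diff_union_self, union_eq_self_of_subset_right (singleton_subset_iff.mpr hfX)]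
    rw [hSf] at hlamdel
    have hsub := M.rk'_submod hXE (diff_subset (t := {f}))
    have h1 : X ∪ (M.E \ {f}) = M.E := by
      apply subset_antisymm (union_subset hXE diff_subset)
      intro x hx
      by_cases hxf : x = f
      · exact Or.inl (hxf ▸ hfX)
      · exact Or.inr ⟨hx, hxf⟩
    have h2 : X ∩ (M.E \ {f}) = X \ {f} := by
      ext x
      exact ⟨fun ⟨h1, _, h3⟩ => ⟨h1, h3⟩, fun ⟨h1, h2⟩ => ⟨h1, hXE h1, h2⟩⟩
    rw [h1, h2] at hsub
    have hrS : M.rk' S = M.rk' (X \ {f}) := rfl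
    omega
  · have hSX : S = X := diff_singleton_eq_self hfX
    have hg : (M.del {f}).lam S = (M.del {f}).lam X := by rw [hSX]
    rw [hSX] at hlamdel
    have hsub := M.rk'_submod (A := M.E \ {f}) (B := M.E \ X) diff_subset diff_subset
    have h1 : (M.E \ {f}) ∪ (M.E \ X) = M.E := by
      apply subset_antisymm (union_subset diff_subset diff_subset)
      intro x hx
      by_cases hxf : x = f
      · exact Or.inr ⟨hx, fun h => hfX (hxf ▸ h)⟩
      · exact Or.inl ⟨hx, hxf⟩
    have h2 : (M.E \ {f}) ∩ (M.E \ X) = M.E \ (X ∪ {f}) := by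
      rw [diff_inter_diff, union_comm]
    rw [h1, h2] at hsub
    omega

lemma exists_witness_del (M : Matroid α) [M.Finite] (hQ : Q ⊆ M.E) (hQR : Disjoint Q R)
    (hf : f ∈ M.E \ (Q ∪ R)) (hnd : ¬ M.Deletable Q R f) :
    ∃ A, Q ⊆ A ∧ A ⊆ M.E \ R ∧ f ∈ A ∧ M.lam A = M.kappa Q R ∧
      M.lam (A \ {f}) = M.kappa Q R := by
  have hfE : f ∈ M.E := hf.1
  have hfQ : f ∉ Q := fun h => hf.2 (Or.inl h)
  have hfR : f ∉ R := fun h => hf.2 (Or.inr h)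
  have hlt : (M.del {f}).kappa Q R < M.kappa Q R :=
    lt_of_le_of_ne (M.kappa_del_le hQ hQR hf) hnd
  have hdelfin : (M.del {f}).Finite := M.del_finite {f}
  have hQdel : Q ⊆ (M.del {f}).E := by
    rw [del_ground]
    exact fun x hx => ⟨hQ hx, fun hh => hfQ (mem_singleton_iff.mp hh ▸ hx)⟩
  obtain ⟨S, hQS, hSR, hlamS⟩ := (M.del {f}).exists_kappa_min hQdel hQR
  rw [del_ground] at hSR
  have hSE1 : S ⊆ M.E \ {f} := hSR.trans diff_subset
  have hSE : S ⊆ M.E := hSE1.trans diff_subset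
  have hfS : f ∉ S := fun h => (hSE1 h).2 rfl
  have hSRM : S ⊆ M.E \ R := fun x hx => ⟨(hSR hx).1.1, (hSR hx).2⟩
  set A := insert f S with hA
  have hAE : A ⊆ M.E := insert_subset hfE hSE
  have hAR : A ⊆ M.E \ R := insert_subset ⟨hfE, hfR⟩ hSRM
  have hAS : A \ {f} = S := by
    rw [hA, insert_diff_self_of_notMem hfS]
  -- rank bookkeeping
  have e1 := M.lam_del_singleton hfE hSE1
  have e2 := M.lam_add_rk hSE
  have e3 := M.lam_add_rk hAE
  have hq2 : M.E \ A = M.E \ (S ∪ {f}) := by rw [hA, union_singleton]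
  rw [hq2] at e3
  have e4 : M.kappa Q R ≤ M.lam S := M.kappa_le_lam hQS hSRM
  have e5 : M.kappa Q R ≤ M.lam A := M.kappa_le_lam (hQS.trans (subset_insert f S)) hAR
  have e6a : M.rk' S ≤ M.rk' A := M.rk'_le_insert hSE hfE
  have e6b : M.rk' A ≤ M.rk' S + 1 := M.rk'_insert_le hSE hfE
  have hp : M.E \ S = insert f (M.E \ (S ∪ {f})) := by
    ext x
    simp only [mem_diff, mem_insert_iff, mem_union, mem_singleton_iff]
    constructor
    · rintro ⟨hxE, hxS⟩
      by_cases hxf : x = f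
      · exact Or.inl hxf
      · exact Or.inr ⟨hxE, by tauto⟩
    · rintro (rfl | ⟨hxE, hx⟩)
      · exact ⟨hfE, hfS⟩
      · exact ⟨hxE, fun h => hx (Or.inl h)⟩
  have e7a : M.rk' (M.E \ (S ∪ {f})) ≤ M.rk' (M.E \ S) := by
    rw [hp]; exact M.rk'_le_insert diff_subset hfE
  have e7b : M.rk' (M.E \ S) ≤ M.rk' (M.E \ (S ∪ {f})) + 1 := by
    rw [hp]; exact M.rk'_insert_le diff_subset hfE
  have e8a : M.rk' (M.E \ {f}) ≤ M.rk' M.E := M.rk'_mono diff_subset (subset_refl _)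
  have e8b : M.rk' M.E ≤ M.rk' (M.E \ {f}) + 1 := by
    have h := M.rk'_insert_le (X := M.E \ {f}) diff_subset hfE
    rwa [insert_diff_singleton, insert_eq_self.mpr hfE] at h
  rw [hlamS] at e1
  refine ⟨A, hQS.trans (subset_insert f S), hAR, mem_insert f S, ?_, ?_⟩
  · omega
  · rw [hAS]; omega

end Matroid


namespace Matroid

variable {M : Matroid α} {X Y A B Q R S : Set α} {e f : α}

lemma exists_witness (M : Matroid α) [M.Finite] (hQ : Q ⊆ M.E) (hQR : Disjoint Q R)
    (hf : f ∈ M.E \ (Q ∪ R)) (hnf : ¬ M.Flexible Q R f) :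
    ∃ A, Q ⊆ A ∧ A ⊆ M.E \ R ∧ f ∈ A ∧ M.lam A = M.kappa Q R ∧
      M.lam (A \ {f}) = M.kappa Q R := by
  rw [Matroid.Flexible, not_and_or] at hnf
  rcases hnf with hnd | hnc
  · exact M.exists_witness_del hQ hQR hf hnd
  · have hdualfin : M✶.Finite := M.dual_finite
    have hnd : ¬ M✶.Deletable Q R f := by
      intro hdel
      apply hnc
      rw [Matroid.Contractible, Matroid.con]
      have hfin : (M✶.del {f}).Finite := M✶.del_finite {f}
      rw [(M✶.del {f}).kappa_dual Q R]
      rw [Matroid.Deletable] at hdel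
      rw [hdel, M.kappa_dual Q R]
    obtain ⟨A, h1, h2, h3, h4, h5⟩ := M✶.exists_witness_del (by rwa [dual_ground])
      hQR (by rwa [dual_ground]) hnd
    rw [dual_ground] at h2
    have hAE : A ⊆ M.E := h2.trans diff_subset
    refine ⟨A, h1, h2, h3, ?_, ?_⟩
    · rw [← M.lam_dual hAE, ← M.kappa_dual Q R]; exact h4
    · rw [← M.lam_dual (diff_subset.trans hAE), ← M.kappa_dual Q R]; exact h5

lemma witness_closure (M : Matroid α) [M.Finite] (hA : A ⊆ M.E) (hfA : f ∈ A)
    (hl : M.lam A = M.lam (A \ {f})) :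
    (f ∈ M.closure (A \ {f}) ∩ M.closure (M.E \ A)) ∨
      (f ∈ M✶.closure (A \ {f}) ∩ M✶.closure (M.E \ A)) := by
  have hfE : f ∈ M.E := hA hfA
  have hAfE : A \ {f} ⊆ M.E := diff_subset.trans hA
  have hAfin : A.Finite := M.set_finite A hA
  have hE : M.E \ (A \ {f}) = insert f (M.E \ A) := by
    ext x
    simp only [mem_diff, mem_insert_iff, mem_singleton_iff]
    constructor
    · rintro ⟨hxE, hx⟩
      by_cases hxf : x = f
      · exact Or.inl hxf
      · exact Or.inr ⟨hxE, fun hxA => hx ⟨hxA, hxf⟩⟩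
    · rintro (rfl | ⟨hxE, hxA⟩)
      · exact ⟨hfE, fun h => h.2 rfl⟩
      · exact ⟨hxE, fun h => hxA h.1⟩
  have hins : insert f (A \ {f}) = A := by
    rw [insert_diff_singleton, insert_eq_self.mpr hfA]
  have eq1 := M.lam_add_rk hA
  have eq2 := M.lam_add_rk hAfE
  rw [hE] at eq2
  have b1 : M.rk' (A \ {f}) ≤ M.rk' A := by
    have := M.rk'_le_insert hAfE hfE; rwa [hins] at this
  have b2 : M.rk' A ≤ M.rk' (A \ {f}) + 1 := by
    have := M.rk'_insert_le hAfE hfE; rwa [hins] at this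
  have b3 : M.rk' (M.E \ A) ≤ M.rk' (insert f (M.E \ A)) :=
    M.rk'_le_insert diff_subset hfE
  have b4 : M.rk' (insert f (M.E \ A)) ≤ M.rk' (M.E \ A) + 1 :=
    M.rk'_insert_le diff_subset hfE
  have hcase : (M.rk' A = M.rk' (A \ {f}) ∧
      M.rk' (insert f (M.E \ A)) = M.rk' (M.E \ A)) ∨
      (M.rk' A = M.rk' (A \ {f}) + 1 ∧
      M.rk' (insert f (M.E \ A)) = M.rk' (M.E \ A) + 1) := by omega
  rcases hcase with ⟨hc1, hc2⟩ | ⟨hc1, hc2⟩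
  · left
    constructor
    · rw [mem_closure_iff_rk' hAfE hfE, hins]; exact hc1
    · rw [mem_closure_iff_rk' diff_subset hfE]; exact hc2
  · right
    have hdfin : M✶.Finite := M.dual_finite
    have d1 := M.rk'_dual_add hA
    have d2 := M.rk'_dual_add hAfE
    have d3 := M.rk'_dual_add (diff_subset (s := M.E) (t := A))
    have d4 := M.rk'_dual_add (X := insert f (M.E \ A)) (insert_subset hfE diff_subset)
    rw [hE] at d2
    rw [diff_diff_cancel_left hA] at d3
    have hd4e : M.E \ insert f (M.E \ A) = A \ {f} := by
      ext x
      simp only [mem_diff, mem_insert_iff, mem_singleton_iff]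
      constructor
      · rintro ⟨hxE, hx⟩
        push_neg at hx
        obtain ⟨hxf, hx2⟩ := hx
        exact ⟨hx2 hxE, hxf⟩
      · rintro ⟨hxA, hxf⟩
        exact ⟨hA hxA, fun h => by
          rcases h with h | ⟨_, h2⟩
          · exact hxf h
          · exact h2 hxA⟩
    rw [hd4e] at d4
    have hcard1 : (A \ {f}).ncard + 1 = A.ncard := ncard_diff_singleton_add_one hfA hAfin
    have hcard2 : (insert f (M.E \ A)).ncard = (M.E \ A).ncard + 1 :=
      ncard_insert_of_notMem (fun h => h.2 hfA) (M.ground_finite.diff (t := A))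
    have g1 : M✶.rk' A = M✶.rk' (A \ {f}) := by omega
    have g2 : M✶.rk' (insert f (M.E \ A)) = M✶.rk' (M.E \ A) := by omega
    constructor
    · rw [mem_closure_iff_rk' (M := M✶) hAfE hfE, hins]; exact g1
    · rw [mem_closure_iff_rk' (M := M✶) (X := M.E \ A) diff_subset hfE]; exact g2

end Matroid


/-- Admissible minimizers of the connectivity function: the "lattice" of k-separations. -/
def Matroid.Good (M : Matroid α) (Q R : Set α) (k : ℕ) (X : Set α) : Prop :=
  Q ⊆ X ∧ X ⊆ M.E \ R ∧ M.lam X = k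

namespace Matroid

variable {M : Matroid α} {X Y A B Q R S D F : Set α} {e f : α} {k : ℕ}

lemma lam_submod (M : Matroid α) [M.Finite] (hA : A ⊆ M.E) (hB : B ⊆ M.E) :
    M.lam (A ∩ B) + M.lam (A ∪ B) ≤ M.lam A + M.lam B := by
  have s1 := M.rk'_submod hA hB
  have s2 := M.rk'_submod (A := M.E \ A) (B := M.E \ B) diff_subset diff_subset
  have h1 : (M.E \ A) ∪ (M.E \ B) = M.E \ (A ∩ B) := (diff_inter (s := M.E)).symm
  have h2 : (M.E \ A) ∩ (M.E \ B) = M.E \ (A ∪ B) := diff_inter_diff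
  rw [h1, h2] at s2
  have e1 := M.lam_add_rk hA
  have e2 := M.lam_add_rk hB
  have e3 := M.lam_add_rk (X := A ∩ B) ((inter_subset_left).trans hA)
  have e4 := M.lam_add_rk (union_subset hA hB)
  omega

lemma Good.subset_ground (h : M.Good Q R k X) : X ⊆ M.E := h.2.1.trans diff_subset

lemma Good.inter [M.Finite] (hmin : ∀ X, Q ⊆ X → X ⊆ M.E \ R → k ≤ M.lam X)
    (hA : M.Good Q R k A) (hB : M.Good Q R k B) : M.Good Q R k (A ∩ B) := by
  have hsub := M.lam_submod hA.subset_ground hB.subset_ground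
  have hQi : Q ⊆ A ∩ B := subset_inter hA.1 hB.1
  have hRi : A ∩ B ⊆ M.E \ R := inter_subset_left.trans hA.2.1
  have hQu : Q ⊆ A ∪ B := hA.1.trans subset_union_left
  have hRu : A ∪ B ⊆ M.E \ R := union_subset hA.2.1 hB.2.1
  have k1 := hmin _ hQi hRi
  have k2 := hmin _ hQu hRu
  have := hA.2.2
  have := hB.2.2
  exact ⟨hQi, hRi, by omega⟩

lemma Good.union [M.Finite] (hmin : ∀ X, Q ⊆ X → X ⊆ M.E \ R → k ≤ M.lam X)
    (hA : M.Good Q R k A) (hB : M.Good Q R k B) : M.Good Q R k (A ∪ B) := by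
  have hsub := M.lam_submod hA.subset_ground hB.subset_ground
  have hQi : Q ⊆ A ∩ B := subset_inter hA.1 hB.1
  have hRi : A ∩ B ⊆ M.E \ R := inter_subset_left.trans hA.2.1
  have hQu : Q ⊆ A ∪ B := hA.1.trans subset_union_left
  have hRu : A ∪ B ⊆ M.E \ R := union_subset hA.2.1 hB.2.1
  have k1 := hmin _ hQi hRi
  have k2 := hmin _ hQu hRu
  have := hA.2.2
  have := hB.2.2
  exact ⟨hQu, hRu, by omega⟩

/-- The key uncrossing lemma: there is a first non-flexible element. -/
lemma exists_first (M : Matroid α) [M.Finite]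
    (hmin : ∀ X, Q ⊆ X → X ⊆ M.E \ R → k ≤ M.lam X)
    (hF : F ⊆ M.E \ (Q ∪ R)) (hFne : F.Nonempty)
    (hwit : ∀ f ∈ F, ∃ A, M.Good Q R k A ∧ M.Good Q R k (A \ {f}) ∧ f ∈ A)
    (hD : D = ∅ ∨ (M.Good Q R k D ∧ D ∩ F = ∅)) :
    ∃ f₀ A₀, f₀ ∈ F ∧ M.Good Q R k A₀ ∧ M.Good Q R k (A₀ \ {f₀}) ∧ f₀ ∈ A₀ ∧
      D ⊆ A₀ ∧ A₀ ∩ F = {f₀} := by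
  have hgD : ∀ g ∈ F, g ∉ D := by
    intro g hg hD'
    rcases hD with rfl | ⟨_, hD2⟩
    · exact hD'
    · have : g ∈ D ∩ F := ⟨hD', hg⟩
      rw [hD2] at this
      exact this
  have hpush : ∀ g ∈ F, ∀ B, M.Good Q R k B → M.Good Q R k (B \ {g}) → g ∈ B →
      M.Good Q R k (B ∪ D) ∧ M.Good Q R k ((B ∪ D) \ {g}) ∧ g ∈ B ∪ D ∧ D ⊆ B ∪ D := by
    intro g hg B h1 h2 h3
    rcases hD with rfl | ⟨hD1, _⟩
    · rw [union_empty]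
      exact ⟨h1, h2, h3, empty_subset _⟩
    · have hgD' : g ∉ D := hgD g hg
      have hdiff : (B ∪ D) \ {g} = (B \ {g}) ∪ D := by
        ext x
        simp only [mem_diff, mem_union, mem_singleton_iff]
        constructor
        · rintro ⟨h | h, hx⟩
          · exact Or.inl ⟨h, hx⟩
          · exact Or.inr h
        · rintro (⟨h, hx⟩ | h)
          · exact ⟨Or.inl h, hx⟩
          · exact ⟨Or.inr h, fun hh => hgD' (hh ▸ h)⟩
      refine ⟨Good.union hmin h1 hD1, ?_, Or.inl h3, subset_union_right⟩
      rw [hdiff]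
      exact Good.union hmin h2 hD1
  set T := {n : ℕ | ∃ p : α × Set α, (p.1 ∈ F ∧ M.Good Q R k p.2 ∧
    M.Good Q R k (p.2 \ {p.1}) ∧ p.1 ∈ p.2 ∧ D ⊆ p.2) ∧ p.2.ncard = n} with hT
  have hTne : T.Nonempty := by
    obtain ⟨g, hg⟩ := hFne
    obtain ⟨B, h1, h2, h3⟩ := hwit g hg
    obtain ⟨p1, p2, p3, p4⟩ := hpush g hg B h1 h2 h3
    exact ⟨(B ∪ D).ncard, (g, B ∪ D), ⟨hg, p1, p2, p3, p4⟩, rfl⟩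
  obtain ⟨⟨f₀, A₀⟩, ⟨hf₀F, hGA, hGAf, hf₀A, hDA⟩, hcard⟩ := Nat.sInf_mem hTne
  have hcard' : A₀.ncard = sInf T := hcard
  refine ⟨f₀, A₀, hf₀F, hGA, hGAf, hf₀A, hDA, ?_⟩
  refine subset_antisymm ?_ (singleton_subset_iff.mpr ⟨hf₀A, hf₀F⟩)
  rintro g ⟨hgA, hgF⟩
  rw [mem_singleton_iff]
  by_contra hne
  obtain ⟨B, hB1, hB2, hB3⟩ := hwit g hgF
  obtain ⟨hGB', hGB'g, hgB', hDB'⟩ := hpush g hgF B hB1 hB2 hB3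
  have hgC : g ∈ A₀ ∩ (B ∪ D) := ⟨hgA, hgB'⟩
  have hGC : M.Good Q R k (A₀ ∩ (B ∪ D)) := Good.inter hmin hGA hGB'
  have hCg : (A₀ ∩ (B ∪ D)) \ {g} = A₀ ∩ ((B ∪ D) \ {g}) := inter_diff_assoc A₀ (B ∪ D) {g}
  have hGCg : M.Good Q R k ((A₀ ∩ (B ∪ D)) \ {g}) := by
    rw [hCg]; exact Good.inter hmin hGA hGB'g
  have hDC : D ⊆ A₀ ∩ (B ∪ D) := subset_inter hDA hDB'
  have hA₀fin : A₀.Finite := M.set_finite A₀ hGA.subset_ground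
  have hmin1 : sInf T ≤ (A₀ ∩ (B ∪ D)).ncard :=
    Nat.sInf_le ⟨(g, A₀ ∩ (B ∪ D)), ⟨hgF, hGC, hGCg, hgC, hDC⟩, rfl⟩
  have hCA : A₀ ∩ (B ∪ D) = A₀ := by
    refine eq_of_subset_of_ncard_le inter_subset_left ?_ hA₀fin
    omega
  have hGAg : M.Good Q R k (A₀ \ {g}) := by
    have h := hGCg
    rw [hCA] at h
    exact h
  have hf₀' : f₀ ∈ A₀ \ {g} := ⟨hf₀A, fun h => hne ((mem_singleton_iff.mp h).symm ▸ rfl)⟩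
  have hGAgf : M.Good Q R k ((A₀ \ {g}) \ {f₀}) := by
    have heq : (A₀ \ {g}) \ {f₀} = (A₀ \ {f₀}) ∩ (A₀ \ {g}) := by
      ext x
      simp only [mem_diff, mem_inter_iff, mem_singleton_iff]
      tauto
    rw [heq]
    exact Good.inter hmin hGAf hGAg
  have hDAg : D ⊆ A₀ \ {g} := fun x hx => ⟨hDA hx,
    fun h => hgD g hgF ((mem_singleton_iff.mp h) ▸ hx)⟩
  have hmin2 : sInf T ≤ (A₀ \ {g}).ncard :=
    Nat.sInf_le ⟨(f₀, A₀ \ {g}), ⟨hf₀F, hGAg, hGAgf, hf₀', hDAg⟩, rfl⟩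
  have hlt : (A₀ \ {g}).ncard < A₀.ncard := ncard_diff_singleton_lt_of_mem hgA hA₀fin
  omega

end Matroid


namespace Matroid

variable {M : Matroid α} {Q R D F : Set α} {k : ℕ}

lemma chain_aux (M : Matroid α) [M.Finite]
    (hmin : ∀ X, Q ⊆ X → X ⊆ M.E \ R → k ≤ M.lam X) :
    ∀ (m : ℕ) (F : Set α), F.ncard = m → F ⊆ M.E \ (Q ∪ R) →
    (∀ f ∈ F, ∃ A, M.Good Q R k A ∧ M.Good Q R k (A \ {f}) ∧ f ∈ A) →
    ∀ D : Set α, (D = ∅ ∨ (M.Good Q R k D ∧ D ∩ F = ∅)) →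
    ∃ (n : ℕ) (f : Fin n → α) (A : Fin n → Set α),
      Function.Injective f ∧ Set.range f = F ∧
      (∀ i, D ⊆ A i) ∧ (∀ i j, i ≤ j → A i ⊆ A j) ∧
      (∀ i, (Q ⊆ A i ∧ A i ⊆ M.E \ R ∧ M.lam (A i) ≤ k) ∧
        (A i ∩ F = f '' {j | j ≤ i}) ∧
        ((f i ∈ M.closure (A i \ {f i}) ∩ M.closure (M.E \ A i)) ∨
          (f i ∈ M✶.closure (A i \ {f i}) ∩ M✶.closure (M.E \ A i)))) := by
  intro m
  induction m with
  | zero =>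
    intro F hcard hF _ D _
    have hFfin : F.Finite := M.set_finite F (hF.trans diff_subset)
    have hF0 : F = ∅ := (ncard_eq_zero hFfin).mp hcard
    refine ⟨0, Fin.elim0, Fin.elim0, fun i => i.elim0, ?_, fun i => i.elim0,
      fun i => i.elim0, fun i => i.elim0⟩
    rw [range_eq_empty, hF0]
  | succ m ih =>
    intro F hcard hF hwit D hD
    have hFfin : F.Finite := M.set_finite F (hF.trans diff_subset)
    have hFne : F.Nonempty := by
      rw [← ncard_pos hFfin]
      omega
    obtain ⟨f₀, A₀, hf₀F, hGA₀, hGA₀f, hf₀A₀, hDA₀, hA₀F⟩ :=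
      M.exists_first hmin hF hFne hwit hD
    set F' := F \ {f₀} with hF'
    have hcard' : F'.ncard = m := by
      rw [hF']
      have := ncard_diff_singleton_add_one hf₀F hFfin
      omega
    have hF'sub : F' ⊆ M.E \ (Q ∪ R) := diff_subset.trans hF
    have hwit' : ∀ f ∈ F', ∃ A, M.Good Q R k A ∧ M.Good Q R k (A \ {f}) ∧ f ∈ A :=
      fun f hf => hwit f hf.1
    have hD' : A₀ = ∅ ∨ (M.Good Q R k A₀ ∧ A₀ ∩ F' = ∅) := by
      refine Or.inr ⟨hGA₀, ?_⟩
      ext x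
      simp only [hF', mem_inter_iff, mem_diff, mem_singleton_iff, mem_empty_iff_false,
        iff_false]
      rintro ⟨hxA, hxF, hxf⟩
      exact hxf (by have : x ∈ A₀ ∩ F := ⟨hxA, hxF⟩; rw [hA₀F] at this; exact this)
    obtain ⟨n', f', A', hinj', hrange', hDsub', hmono', hprop'⟩ :=
      ih F' hcard' hF'sub hwit' A₀ hD'
    have hf₀notF' : f₀ ∉ F' := fun h => h.2 rfl
    have hA₀sub : ∀ j : Fin n', A₀ ⊆ A' j := hDsub'
    refine ⟨n' + 1, Fin.cons f₀ f', Fin.cons A₀ A', ?_, ?_, ?_, ?_, ?_⟩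
    · -- injectivity
      intro i j h
      induction i using Fin.cases with
      | zero =>
        induction j using Fin.cases with
        | zero => rfl
        | succ j' =>
          exfalso
          rw [Fin.cons_zero, Fin.cons_succ] at h
          exact hf₀notF' (hrange' ▸ ⟨j', h.symm⟩)
      | succ i' =>
        induction j using Fin.cases with
        | zero =>
          exfalso
          rw [Fin.cons_zero, Fin.cons_succ] at h
          exact hf₀notF' (hrange' ▸ ⟨i', h⟩)
        | succ j' =>
          rw [Fin.cons_succ, Fin.cons_succ] at h
          rw [hinj' h]
    · -- range
      rw [Fin.range_cons, hrange', hF', insert_diff_singleton, insert_eq_self.mpr hf₀F]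
    · -- D-containment
      intro i
      induction i using Fin.cases with
      | zero => rw [Fin.cons_zero]; exact hDA₀
      | succ j =>
        rw [Fin.cons_succ]
        rcases hD with rfl | ⟨_, _⟩
        · exact empty_subset _
        · exact hDA₀.trans (hA₀sub j)
    · -- monotone chain
      intro i j hij
      induction j using Fin.cases with
      | zero =>
        have : i = 0 := Fin.le_zero_iff.mp hij
        subst this
        exact subset_refl _
      | succ j' =>
        induction i using Fin.cases with
        | zero =>
          rw [Fin.cons_zero, Fin.cons_succ]
          exact hA₀sub j'
        | succ i' =>
          rw [Fin.cons_succ, Fin.cons_succ]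
          exact hmono' i' j' (by rwa [Fin.succ_le_succ_iff] at hij)
    · -- main properties
      intro i
      induction i using Fin.cases with
      | zero =>
        rw [Fin.cons_zero]
        refine ⟨⟨hGA₀.1, hGA₀.2.1, le_of_eq hGA₀.2.2⟩, ?_, ?_⟩
        · have hset : {j : Fin (n' + 1) | j ≤ 0} = {0} := by
            ext j
            simp [Fin.le_zero_iff]
          rw [hset, image_singleton, Fin.cons_zero, hA₀F]
        · exact M.witness_closure hGA₀.subset_ground hf₀A₀ (hGA₀.2.2.trans hGA₀f.2.2.symm)
      | succ j =>
        rw [Fin.cons_succ]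
        obtain ⟨hp1, hp2, hp3⟩ := hprop' j
        refine ⟨hp1, ?_, ?_⟩
        · have hsplit : A' j ∩ F = insert f₀ (A' j ∩ F') := by
            ext x
            simp only [mem_inter_iff, mem_insert_iff, hF', mem_diff, mem_singleton_iff]
            constructor
            · rintro ⟨hxA, hxF⟩
              by_cases hxf : x = f₀
              · exact Or.inl hxf
              · exact Or.inr ⟨hxA, hxF, hxf⟩
            · rintro (rfl | ⟨h1, h2, _⟩)
              · exact ⟨hA₀sub j hf₀A₀, hf₀F⟩
              · exact ⟨h1, h2⟩
          rw [hsplit, hp2]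
          ext x
          simp only [mem_insert_iff, mem_image, mem_setOf_eq]
          constructor
          · rintro (rfl | ⟨l, hl, rfl⟩)
            · exact ⟨0, Fin.zero_le _, by rw [Fin.cons_zero]⟩
            · exact ⟨l.succ, by rwa [Fin.succ_le_succ_iff], by rw [Fin.cons_succ]⟩
          · rintro ⟨l, hl, rfl⟩
            induction l using Fin.cases with
            | zero => left; rw [Fin.cons_zero]
            | succ l' =>
              right
              exact ⟨l', by rwa [Fin.succ_le_succ_iff] at hl, by rw [Fin.cons_succ]⟩
        · exact hp3

end Matroid

end Aux

theorem stmt_6 (M : Matroid α) [M.Finite] (Q R : Set α) (hQ : Q ⊆ M.E) (hR : R ⊆ M.E)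
    (hQR : Disjoint Q R) (k : ℕ) (hk : k = M.kappa Q R)
    (F : Set α) (hF : F ⊆ M.E \ (Q ∪ R)) (hnf : ∀ e ∈ F, ¬ M.Flexible Q R e) :
    ∃ (n : ℕ) (f : Fin n → α) (A : Fin n → Set α),
      Function.Injective f ∧ Set.range f = F ∧
      (∀ i j : Fin n, i ≤ j → A i ⊆ A j) ∧
      (∀ i : Fin n,
        (Q ⊆ A i ∧ A i ⊆ M.E \ R ∧ M.lam (A i) ≤ k) ∧
        (A i ∩ F = f '' {j : Fin n | j ≤ i}) ∧
        ((f i ∈ M.closure (A i \ {f i}) ∩ M.closure (M.E \ A i)) ∨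
          (f i ∈ M✶.closure (A i \ {f i}) ∩ M✶.closure (M.E \ A i)))) := by
  have hmin : ∀ X, Q ⊆ X → X ⊆ M.E \ R → k ≤ M.lam X := fun X h1 h2 =>
    hk ▸ M.kappa_le_lam h1 h2
  have hwit : ∀ f ∈ F, ∃ A, M.Good Q R k A ∧ M.Good Q R k (A \ {f}) ∧ f ∈ A := by
    intro f hf
    obtain ⟨A, h1, h2, h3, h4, h5⟩ := M.exists_witness hQ hQR (hF hf) (hnf f hf)
    have hfQ : f ∉ Q := fun h => (hF hf).2 (Or.inl h)
    refine ⟨A, ⟨h1, h2, by rw [hk]; exact h4⟩, ⟨?_, diff_subset.trans h2, by rw [hk]; exact h5⟩, h3⟩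
    exact fun x hx => ⟨h1 hx, fun hh => hfQ ((mem_singleton_iff.mp hh) ▸ hx)⟩
  obtain ⟨n, f, A, hinj, hrange, _, hmono, hprop⟩ :=
    M.chain_aux hmin F.ncard F rfl hF hwit ∅ (Or.inl rfl)
  exact ⟨n, f, A, hinj, hrange, hmono, hprop⟩
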